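/- Let C be a covering of a finite nonempty set U. If the family {SH({x}) : x ∈ U} forms a partition of U (i.e., for all x, y ∈ U, either SH({x}) = SH({y}) or SH({x}) ∩ SH({y}) = ∅), then SH(SH(X)) = SH(X) for all X ⊆ U. -/
import Mathlib


open Set

/-- A covering of a finite nonempty universe `α`: a family of nonempty subsets whose union is everything. -/
def IsCovering {α : Type*} (C : Set (Set α)) : Prop :=
  (∀ K ∈ C, K.Nonempty) ∧ ⋃₀ C = Set.univ

/-- The second type of covering lower approximation. -/
def SL {α : Type*} (C : Set (Set α)) (X : Set α) : Set α :=
  ⋃₀ {K | K ∈ C ∧ K ⊆ X}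

/-- The second type of covering upper approximation. -/
def SH {α : Type*} (C : Set (Set α)) (X : Set α) : Set α :=
  ⋃₀ {K | K ∈ C ∧ (K ∩ X).Nonempty}

/-- The minimal description of a point. -/
def Md {α : Type*} (C : Set (Set α)) (x : α) : Set (Set α) :=
  {K | K ∈ C ∧ x ∈ K ∧ ∀ S ∈ C, x ∈ S → S ⊆ K → S = K}

/-- A covering is unary if every point has exactly one element in its minimal description. -/
def Unary {α : Type*} (C : Set (Set α)) : Prop :=
  ∀ x : α, ∃! K, K ∈ Md C x

/-- The neighborhood of a point. -/
def Nbhd {α : Type*} (C : Set (Set α)) (x : α) : Set α :=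
  ⋂₀ {K | K ∈ C ∧ x ∈ K}

/-- The indiscernible neighborhood of a point. -/
def IndNbhd {α : Type*} (C : Set (Set α)) (x : α) : Set α :=
  ⋃₀ {K | K ∈ C ∧ x ∈ K}

/-- A member of the covering is reducible if it is a union of other members. -/
def Reducible {α : Type*} (C : Set (Set α)) (K : Set α) : Prop :=
  ∃ D ⊆ C \ {K}, K = ⋃₀ D

/-- The reduct of a covering: its irreducible members. -/
def reduct {α : Type*} (C : Set (Set α)) : Set (Set α) :=
  {K | K ∈ C ∧ ¬ Reducible C K}

/-- The closure operator induced by the fixed point family of `SL`. -/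
def clC {α : Type*} (C : Set (Set α)) (X : Set α) : Set α :=
  ⋂₀ {S | SL C S = S ∧ X ⊆ S}

theorem stmt_8 {α : Type*} [Fintype α] [Nonempty α] (C : Set (Set α))
    (hC : IsCovering C)
    (h : ∀ x y : α, SH C {x} = SH C {y} ∨ SH C {x} ∩ SH C {y} = ∅) :
    ∀ X : Set α, SH C (SH C X) = SH C X := by
  intro X
  have hsub : ∀ Y : Set α, Y ⊆ SH C Y := by
    intro Y z hz
    obtain ⟨K, hK, hzK⟩ := by
      have : z ∈ ⋃₀ C := hC.2 ▸ Set.mem_univ z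
      exact this
    exact ⟨K, ⟨hK, ⟨z, hzK, hz⟩⟩, hzK⟩
  apply Set.Subset.antisymm _ (hsub (SH C X))
  rintro z ⟨K, ⟨hKC, y, hyK, hySH⟩, hzK⟩
  obtain ⟨K', ⟨hK'C, x, hxK', hxX⟩, hyK'⟩ := hySH
  have hyy : y ∈ SH C {y} := hsub {y} rfl
  have hyx : y ∈ SH C {x} := ⟨K', ⟨hK'C, ⟨x, hxK', rfl⟩⟩, hyK'⟩
  have heq : SH C {y} = SH C {x} := by
    rcases h y x with he | hd
    · exact he
    · exact absurd (Set.eq_empty_iff_forall_notMem.mp hd y ⟨hyy, hyx⟩) (fun h => h)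
  have hz1 : z ∈ SH C {y} := ⟨K, ⟨hKC, ⟨y, hyK, rfl⟩⟩, hzK⟩
  rw [heq] at hz1
  obtain ⟨K2, ⟨hK2C, w, hwK2, hwx⟩, hzK2⟩ := hz1
  exact ⟨K2, ⟨hK2C, ⟨w, hwK2, hwx ▸ hxX⟩⟩, hzK2⟩
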